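/- Let f, g : ℝ → ℝ be twice differentiable with f''(t) = -f(t) and g''(t) = -g(t) for all t. Then the function I₁,₁(t) = ((f'(t))² - (g'(t))² - (f(t))² + (g(t))²)·sin(2t) - 2·(f(t)·f'(t) - g(t)·g'(t))·cos(2t) is constant, i.e., I₁,₁(t) = I₁,₁(0) for all t ∈ ℝ. -/

import Mathlib

theorem uncoupled_oscillators_first_integral_5 (f f' g g' : ℝ → ℝ)
    (hf : ∀ t, HasDerivAt f (f' t) t)
    (hf' : ∀ t, HasDerivAt f' (-(f t)) t)
    (hg : ∀ t, HasDerivAt g (g' t) t)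
    (hg' : ∀ t, HasDerivAt g' (-(g t)) t) :
    ∀ t : ℝ, ((f' t)^2 - (g' t)^2 - (f t)^2 + (g t)^2) * Real.sin (2*t) - 2 * (f t * f' t - g t * g' t) * Real.cos (2*t) = ((f' 0)^2 - (g' 0)^2 - (f 0)^2 + (g 0)^2) * Real.sin (2*0) - 2 * (f 0 * f' 0 - g 0 * g' 0) * Real.cos (2*0) := by
  have key : ∀ t : ℝ, HasDerivAt (fun t => ((f' t)^2 - (g' t)^2 - (f t)^2 + (g t)^2) * Real.sin (2*t) - 2 * (f t * f' t - g t * g' t) * Real.cos (2*t)) 0 t := by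
    intro t
    have hsin : HasDerivAt (fun t : ℝ => Real.sin (2*t)) (2 * Real.cos (2*t)) t := by
      simpa [mul_comm] using ((hasDerivAt_id t).const_mul 2).sin
    have hcos : HasDerivAt (fun t : ℝ => Real.cos (2*t)) (-(2 * Real.sin (2*t))) t := by
      simpa [mul_comm] using ((hasDerivAt_id t).const_mul 2).cos
    have h1 : HasDerivAt (fun t => (f' t)^2 - (g' t)^2 - (f t)^2 + (g t)^2)
        (2 * f' t * (-(f t)) - 2 * g' t * (-(g t)) - 2 * f t * f' t + 2 * g t * g' t) t := by
      exact ((((hf' t).pow 2).sub ((hg' t).pow 2)).sub ((hf t).pow 2)).add ((hg t).pow 2) |>.congr_deriv (by ring)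
    have h2 : HasDerivAt (fun t => 2 * (f t * f' t - g t * g' t))
        (2 * ((f' t * f' t + f t * (-(f t))) - (g' t * g' t + g t * (-(g t))))) t :=
      (((hf t).mul (hf' t)).sub ((hg t).mul (hg' t))).const_mul 2
    have := (h1.mul hsin).sub (h2.mul hcos)
    refine this.congr_deriv ?_
    ring
  have := fun t : ℝ => (key t).deriv
  intro t
  exact (is_const_of_deriv_eq_zero (fun x => (key x).differentiableAt)
    (fun x => (key x).deriv) t 0 :)
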